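/- For all reals r, r' ≥ 0 and θ ∈ [0, π], one has 2·min{r, r'}·(θ/π) ≤ arccosh( cosh(r)·cosh(r') − sinh(r)·sinh(r')·cos(θ) ) ≤ |r − r'| + √(sinh(r)·sinh(r'))·θ. (These are the upper and lower bounds for the distance between two points (y,r) and (y',r') of the hyperbolic cone over a metric space, where θ is the angle between y and y'.) -/

import Mathlib

/-- The inverse hyperbolic cosine, defined (for `x ≥ 1`) by
`arcosh x = log (x + sqrt (x² − 1))`. -/
noncomputable def arcosh (x : ℝ) : ℝ :=
  Real.log (x + Real.sqrt (x ^ 2 - 1))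

lemma convexOn_sinh_Ici : ConvexOn ℝ (Set.Ici (0:ℝ)) Real.sinh := by
  apply convexOn_of_deriv2_nonneg (convex_Ici 0) Real.continuous_sinh.continuousOn
  · exact Real.differentiable_sinh.differentiableOn
  · rw [Real.deriv_sinh]; exact Real.differentiable_cosh.differentiableOn
  · intro x hx
    rw [interior_Ici] at hx
    simp only [Function.iterate_succ, Function.iterate_zero, Function.comp, id,
      Real.deriv_sinh, Real.deriv_cosh]
    exact (Real.sinh_pos_iff.mpr hx).le

lemma arcosh_cosh {x : ℝ} (hx : 0 ≤ x) : arcosh (Real.cosh x) = x := by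
  unfold arcosh
  have h1 : Real.sqrt (Real.cosh x ^ 2 - 1) = Real.sinh x := by
    rw [Real.cosh_sq]
    simpa using Real.sqrt_sq (Real.sinh_nonneg_iff.mpr hx)
  rw [h1, Real.cosh_add_sinh, Real.log_exp]

lemma arcosh_le_arcosh {a b : ℝ} (ha : 1 ≤ a) (hab : a ≤ b) : arcosh a ≤ arcosh b := by
  unfold arcosh
  have h1 : (0:ℝ) < a + Real.sqrt (a ^ 2 - 1) := by positivity
  apply Real.log_le_log h1
  have : Real.sqrt (a ^ 2 - 1) ≤ Real.sqrt (b ^ 2 - 1) := by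
    apply Real.sqrt_le_sqrt
    nlinarith
  linarith

set_option maxHeartbeats 1000000 in
/-- two-sided bound for the distance
`arcosh(cosh r cosh r' − sinh r sinh r' cos θ)` in a hyperbolic cone. -/
theorem cone_distance_bounds (r r' θ : ℝ) (hr : 0 ≤ r) (hr' : 0 ≤ r')
    (hθ : θ ∈ Set.Icc (0 : ℝ) Real.pi) :
    2 * min r r' * (θ / Real.pi) ≤
        arcosh (Real.cosh r * Real.cosh r' -
          Real.sinh r * Real.sinh r' * Real.cos θ) ∧
      arcosh (Real.cosh r * Real.cosh r' -
          Real.sinh r * Real.sinh r' * Real.cos θ) ≤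
        |r - r'| + Real.sqrt (Real.sinh r * Real.sinh r') * θ := by
  obtain ⟨hθ0, hθπ⟩ := hθ
  have hπ : (0:ℝ) < Real.pi := Real.pi_pos
  set c : ℝ := Real.cosh r * Real.cosh r' - Real.sinh r * Real.sinh r' * Real.cos θ with hc
  have hsr : 0 ≤ Real.sinh r := Real.sinh_nonneg_iff.mpr hr
  have hsr' : 0 ≤ Real.sinh r' := Real.sinh_nonneg_iff.mpr hr'
  have hcosθ : Real.cos θ ≤ 1 := Real.cos_le_one θ
  -- c = cosh (r - r') + sinh r sinh r' (1 - cos θ)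
  have hceq : c = Real.cosh (r - r') + Real.sinh r * Real.sinh r' * (1 - Real.cos θ) := by
    rw [hc, Real.cosh_sub]; ring
  have hc1 : 1 ≤ c := by
    have h1 := Real.one_le_cosh (r - r')
    have h2 : 0 ≤ Real.sinh r * Real.sinh r' * (1 - Real.cos θ) :=
      mul_nonneg (mul_nonneg hsr hsr') (by linarith)
    linarith [hceq.ge, hceq.le]
  -- half angle: 1 - cos θ = 2 sin (θ/2)^2
  have hhalf : 1 - Real.cos θ = 2 * Real.sin (θ / 2) ^ 2 := by
    have := Real.cos_two_mul' (θ / 2)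
    have h2 : Real.sin (θ/2) ^ 2 + Real.cos (θ/2) ^ 2 = 1 := Real.sin_sq_add_cos_sq _
    have h3 : 2 * (θ / 2) = θ := by ring
    rw [h3] at this
    linarith
  have hsin0 : 0 ≤ Real.sin (θ / 2) :=
    Real.sin_nonneg_of_nonneg_of_le_pi (by linarith) (by linarith)
  constructor
  · -- lower bound
    set m := min r r' with hm
    have hm0 : 0 ≤ m := le_min hr hr'
    have hmr : m ≤ r := min_le_left _ _
    have hmr' : m ≤ r' := min_le_right _ _
    have hsm : 0 ≤ Real.sinh m := Real.sinh_nonneg_iff.mpr hm0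
    have hsmr : Real.sinh m ≤ Real.sinh r := Real.sinh_le_sinh.mpr hmr
    have hsmr' : Real.sinh m ≤ Real.sinh r' := Real.sinh_le_sinh.mpr hmr'
    have hkey : Real.cosh (2 * m * (θ / Real.pi)) ≤ c := by
      -- cosh(2x) = 1 + 2 sinh x ^ 2
      have hx : 2 * m * (θ / Real.pi) = 2 * (m * (θ / Real.pi)) := by ring
      have hcosh2 : Real.cosh (2 * (m * (θ / Real.pi)))
          = 1 + 2 * Real.sinh (m * (θ / Real.pi)) ^ 2 := by
        rw [Real.cosh_two_mul, Real.cosh_sq]; ring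
      -- sinh (t m) ≤ t sinh m by convexity
      have ht0 : 0 ≤ θ / Real.pi := by positivity
      have ht1 : θ / Real.pi ≤ 1 := by
        rw [div_le_one hπ]; exact hθπ
      have hconv : Real.sinh (m * (θ / Real.pi)) ≤ (θ / Real.pi) * Real.sinh m := by
        have h := (convexOn_sinh_Ici.2 (Set.mem_Ici.mpr (le_refl (0:ℝ)))
          (Set.mem_Ici.mpr hm0) (by linarith : (0:ℝ) ≤ 1 - θ / Real.pi) ht0 (by ring))
        simpa [Real.sinh_zero, mul_comm] using h
      -- Jordan: θ/π ≤ sin (θ/2)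
      have hjordan : θ / Real.pi ≤ Real.sin (θ / 2) := by
        have := Real.mul_le_sin (x := θ / 2) (by linarith) (by linarith)
        calc θ / Real.pi = 2 / Real.pi * (θ / 2) := by field_simp
          _ ≤ Real.sin (θ / 2) := this
      have hsinh0 : 0 ≤ Real.sinh (m * (θ / Real.pi)) :=
        Real.sinh_nonneg_iff.mpr (by positivity)
      have hstep : Real.sinh (m * (θ / Real.pi)) ^ 2 ≤ Real.sinh m ^ 2 * Real.sin (θ/2) ^ 2 := by
        have h1 : Real.sinh (m * (θ / Real.pi)) ≤ Real.sinh m * Real.sin (θ/2) := by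
          have h2 := mul_le_mul_of_nonneg_right hjordan hsm
          calc Real.sinh (m * (θ / Real.pi)) ≤ θ / Real.pi * Real.sinh m := hconv
            _ ≤ Real.sin (θ/2) * Real.sinh m := h2
            _ = Real.sinh m * Real.sin (θ/2) := by ring
        calc Real.sinh (m * (θ / Real.pi)) ^ 2 ≤ (Real.sinh m * Real.sin (θ/2)) ^ 2 :=
              pow_le_pow_left₀ hsinh0 h1 2
          _ = Real.sinh m ^ 2 * Real.sin (θ/2) ^ 2 := by ring
      have hfinal : 1 + 2 * (Real.sinh m ^ 2 * Real.sin (θ/2) ^ 2) ≤ c := by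
        rw [hceq, hhalf]
        have h1 := Real.one_le_cosh (r - r')
        have hmm : Real.sinh m * Real.sinh m ≤ Real.sinh r * Real.sinh r' :=
          mul_le_mul hsmr hsmr' hsm hsr
        nlinarith [sq_nonneg (Real.sin (θ/2)), hmm, h1]
      rw [hx, hcosh2]
      linarith
    calc 2 * m * (θ / Real.pi) = arcosh (Real.cosh (2 * m * (θ / Real.pi))) := by
          rw [arcosh_cosh (by positivity)]
      _ ≤ arcosh c := arcosh_le_arcosh (Real.one_le_cosh _) hkey
  · -- upper bound
    set s := Real.sqrt (Real.sinh r * Real.sinh r') with hs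
    have hs0 : 0 ≤ s := Real.sqrt_nonneg _
    have hs2 : s ^ 2 = Real.sinh r * Real.sinh r' := Real.sq_sqrt (by positivity)
    have habs : 0 ≤ |r - r'| := abs_nonneg _
    have hkey : c ≤ Real.cosh (|r - r'| + s * θ) := by
      have hcoshadd : Real.cosh (|r - r'| + s * θ)
          = Real.cosh |r - r'| * Real.cosh (s * θ) + Real.sinh |r - r'| * Real.sinh (s * θ) :=
        Real.cosh_add _ _
      have h1 : 1 + (s * θ) ^ 2 / 2 ≤ Real.cosh (s * θ) := by
        -- cosh x = 1 + 2 sinh(x/2)^2 ≥ 1 + 2 (x/2)^2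
        have hx2 : 0 ≤ s * θ / 2 := by positivity
        have hsinh : s * θ / 2 ≤ Real.sinh (s * θ / 2) := Real.self_le_sinh_iff.mpr hx2
        have : Real.cosh (s * θ) = 1 + 2 * Real.sinh (s * θ / 2) ^ 2 := by
          have : s * θ = 2 * (s * θ / 2) := by ring
          rw [this, Real.cosh_two_mul, Real.cosh_sq]; ring
        nlinarith
      have hsab : 0 ≤ Real.sinh |r - r'| := Real.sinh_nonneg_iff.mpr habs
      have hsst : 0 ≤ Real.sinh (s * θ) := Real.sinh_nonneg_iff.mpr (by positivity)
      have hcab : 1 ≤ Real.cosh |r - r'| := Real.one_le_cosh _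
      -- 1 - cos θ ≤ θ²/2
      have hub : 1 - Real.cos θ ≤ θ ^ 2 / 2 := by
        have hsinle : Real.sin (θ / 2) ≤ θ / 2 := Real.sin_le (by linarith)
        rw [hhalf]; nlinarith
      have hsq : (s * θ) ^ 2 = Real.sinh r * Real.sinh r' * θ ^ 2 := by
        rw [mul_pow, hs2]
      have hA : Real.sinh r * Real.sinh r' * (1 - Real.cos θ) ≤ (s * θ) ^ 2 / 2 := by
        rw [hsq]
        nlinarith [mul_nonneg hsr hsr', hub]
      have hB : Real.cosh |r - r'| + (s * θ) ^ 2 / 2 ≤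
          Real.cosh |r - r'| * Real.cosh (s * θ) := by
        nlinarith [h1, hcab, sq_nonneg (s * θ),
          mul_nonneg (by linarith : (0:ℝ) ≤ Real.cosh |r - r'| - 1)
            (by nlinarith [sq_nonneg (s*θ)] : (0:ℝ) ≤ Real.cosh (s * θ) - 1)]
      have hC : 0 ≤ Real.sinh |r - r'| * Real.sinh (s * θ) := mul_nonneg hsab hsst
      rw [hceq, hcoshadd, ← Real.cosh_abs (r - r')]
      linarith
    calc arcosh c ≤ arcosh (Real.cosh (|r - r'| + s * θ)) :=
          arcosh_le_arcosh hc1 hkey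
      _ = |r - r'| + s * θ := arcosh_cosh (by positivity)
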